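/- arXiv:2501.03816 — 2 statements merged into one kernel-verified Lean document; each statement's English description precedes it below -/
import Mathlib

section
/- Let a : ℝ → ℝ be continuous and 1-periodic and b : ℝ → ℝ be C¹ and 1-periodic, and suppose there exist constants β, γ ∈ ℝ with a = β + γ·b. If Φ₁ is a positive, 1-periodic, C² function with Φ₁'' − (b·Φ₁)' + a·Φ₁ = k₁·Φ₁ for some k₁ ∈ ℝ, and Φ₂ is a positive, 1-periodic, C² function with Φ₂'' + (b·Φ₂)' + a·Φ₂ = k₂·Φ₂ for some k₂ ∈ ℝ, then k₁ = k₂. In other words, the operators M⁻ : Φ ↦ Φ'' − (bΦ)' + aΦ and M⁺ : Φ ↦ Φ'' + (bΦ)' + aΦ have the same principal eigenvalue when a is an affine function of b. -/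
open Real MeasureTheory Set Filter Topology

noncomputable section

/-- The operator `L_q^λ[r;D]` acting on C² functions `ψ`:
`(L_q^λ[r;D]ψ)(x) = D ψ'' + ((1+q)D' − 2λD) ψ' + (qD'' + λ²D − (1+q)λD' + r) ψ`. -/
def Lop (q lam : ℝ) (r D ψ : ℝ → ℝ) (x : ℝ) : ℝ :=
  D x * deriv (deriv ψ) x + ((1 + q) * deriv D x - 2 * lam * D x) * deriv ψ x +
    (q * deriv (deriv D) x + lam ^ 2 * D x - (1 + q) * lam * deriv D x + r x) * ψ x

/-- `(k, ψ)` is a principal eigenpair of `L_q^λ[r;D]`: `ψ` is a positive, 1-periodic,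
C² function with `L_q^λ[r;D]ψ = kψ`. -/
def IsEigenpair (q lam : ℝ) (r D : ℝ → ℝ) (k : ℝ) (ψ : ℝ → ℝ) : Prop :=
  ContDiff ℝ 2 ψ ∧ (∀ x, 0 < ψ x) ∧ Function.Periodic ψ 1 ∧
    ∀ x, Lop q lam r D ψ x = k * ψ x

/-- The Freidlin–Gärtner infimum `inf_{λ>0} k(λ)/λ`, as an extended real number. -/
def speed (k : ℝ → ℝ) : EReal := ⨅ l : {l : ℝ // 0 < l}, ((k l.1 / l.1 : ℝ) : EReal)

/-- periodicity of the derivative -/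
lemma periodic_deriv' {f : ℝ → ℝ} (hf : Function.Periodic f 1) :
    Function.Periodic (deriv f) 1 := by
  intro x
  have : (fun y => f (y + 1)) = f := funext fun y => hf y
  rw [← deriv_comp_add_const f 1 x, this]

/-- Sign lemma: if `w` is 1-periodic with `w' = γ w + lam Φ`, `Φ > 0`, `γ ≠ 0`, `lam ≠ 0`,
then `((exp (-γ) - 1) * lam) * w x > 0` for every `x`. -/
lemma aux_sign (γ lam : ℝ) (hγ : γ ≠ 0) (hlam : lam ≠ 0)
    (Φ w : ℝ → ℝ) (hΦc : Continuous Φ) (hΦpos : ∀ x, 0 < Φ x)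
    (hwper : Function.Periodic w 1)
    (hw : ∀ x, HasDerivAt w (γ * w x + lam * Φ x) x) :
    ∀ x, 0 < ((Real.exp (-γ) - 1) * lam) * w x := by
  intro x
  set g : ℝ → ℝ := fun t => w t * Real.exp (-γ * t) with hg
  have hgd : ∀ t, HasDerivAt g (lam * (Φ t * Real.exp (-γ * t))) t := by
    intro t
    have he : HasDerivAt (fun t : ℝ => Real.exp (-γ * t)) (Real.exp (-γ * t) * (-γ)) t := by
      simpa using (((hasDerivAt_id t).const_mul (-γ)).exp)
    have : HasDerivAt (fun y => w y * Real.exp (-γ * y))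
        ((γ * w t + lam * Φ t) * Real.exp (-γ * t) + w t * (Real.exp (-γ * t) * (-γ))) t :=
      (hw t).mul he
    convert this using 1
    ring
  have hcont : Continuous fun t => lam * (Φ t * Real.exp (-γ * t)) := by continuity
  have hftc : ∫ t in x..(x+1), lam * (Φ t * Real.exp (-γ * t)) = g (x+1) - g x :=
    intervalIntegral.integral_eq_sub_of_hasDerivAt (fun t _ => hgd t)
      (hcont.intervalIntegrable _ _)
  have hint : ∫ t in x..(x+1), lam * (Φ t * Real.exp (-γ * t))
      = lam * ∫ t in x..(x+1), Φ t * Real.exp (-γ * t) :=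
    intervalIntegral.integral_const_mul _ _
  have hJ : 0 < ∫ t in x..(x+1), Φ t * Real.exp (-γ * t) := by
    apply intervalIntegral.intervalIntegral_pos_of_pos
      ((hΦc.mul (by continuity)).intervalIntegrable _ _)
    · intro t; exact mul_pos (hΦpos t) (Real.exp_pos _)
    · linarith
  have hper' : g (x+1) = Real.exp (-γ) * g x := by
    simp only [hg]
    rw [hwper x, show -γ * (x+1) = (-γ) + (-γ * x) by ring, Real.exp_add]
    ring
  have key : (Real.exp (-γ) - 1) * g x = lam * ∫ t in x..(x+1), Φ t * Real.exp (-γ * t) := by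
    rw [← hint, hftc, hper']; ring
  have hpos : 0 < ((Real.exp (-γ) - 1) * lam) * g x := by
    have h2 : ((Real.exp (-γ) - 1) * lam) * g x
        = lam ^ 2 * ∫ t in x..(x+1), Φ t * Real.exp (-γ * t) := by
      linear_combination lam * key
    rw [h2]
    exact mul_pos (by positivity) hJ
  have hww : (Real.exp (-γ) - 1) * lam * w x
      = ((Real.exp (-γ) - 1) * lam * g x) * Real.exp (γ * x) := by
    have hgx : g x = w x * Real.exp (-γ * x) := rfl
    rw [hgx]
    have : Real.exp (-γ * x) * Real.exp (γ * x) = 1 := by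
      rw [← Real.exp_add]; norm_num
    linear_combination (-((Real.exp (-γ) - 1) * lam * w x)) * this
  rw [hww]
  exact mul_pos hpos (Real.exp_pos _)

/-- Proposition `VP`, from [BouHamRoq25]. If `a = β + γ·b` for
constants `β, γ`, then the operators `Φ ↦ Φ'' − (bΦ)' + aΦ` and `Φ ↦ Φ'' + (bΦ)' + aΦ`,
acting on 1-periodic functions, have the same principal eigenvalue. -/
theorem stmt_11 (a b : ℝ → ℝ) (ha : Continuous a) (haper : Function.Periodic a 1)
    (hb : ContDiff ℝ 1 b) (hbper : Function.Periodic b 1)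
    (β γ : ℝ) (hab : ∀ x, a x = β + γ * b x)
    (k₁ k₂ : ℝ) (Φ₁ Φ₂ : ℝ → ℝ)
    (h1 : ContDiff ℝ 2 Φ₁) (h1pos : ∀ x, 0 < Φ₁ x) (h1per : Function.Periodic Φ₁ 1)
    (heq1 : ∀ x, deriv (deriv Φ₁) x - deriv (fun y => b y * Φ₁ y) x + a x * Φ₁ x
      = k₁ * Φ₁ x)
    (h2 : ContDiff ℝ 2 Φ₂) (h2pos : ∀ x, 0 < Φ₂ x) (h2per : Function.Periodic Φ₂ 1)
    (heq2 : ∀ x, deriv (deriv Φ₂) x + deriv (fun y => b y * Φ₂ y) x + a x * Φ₂ x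
      = k₂ * Φ₂ x) :
    k₁ = k₂ := by
  -- basic differentiability facts
  have hd1 : Differentiable ℝ Φ₁ := h1.differentiable (by norm_num)
  have hd2 : Differentiable ℝ Φ₂ := h2.differentiable (by norm_num)
  have h1' : ContDiff ℝ 1 (deriv Φ₁) := by
    have := (contDiff_succ_iff_deriv (f := Φ₁) (n := 1)).mp (by exact_mod_cast h1)
    exact this.2.2
  have h2' : ContDiff ℝ 1 (deriv Φ₂) := by
    have := (contDiff_succ_iff_deriv (f := Φ₂) (n := 1)).mp (by exact_mod_cast h2)
    exact this.2.2
  have hd1' : Differentiable ℝ (deriv Φ₁) := h1'.differentiable one_ne_zero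
  have hd2' : Differentiable ℝ (deriv Φ₂) := h2'.differentiable one_ne_zero
  have hbd : Differentiable ℝ b := hb.differentiable one_ne_zero
  set l₁ : ℝ := k₁ - β - γ ^ 2 with hl₁
  set l₂ : ℝ := k₂ - β - γ ^ 2 with hl₂
  set w₁ : ℝ → ℝ := fun x => deriv Φ₁ x - b x * Φ₁ x + γ * Φ₁ x with hw₁def
  set w₂ : ℝ → ℝ := fun x => deriv Φ₂ x + b x * Φ₂ x - γ * Φ₂ x with hw₂def
  have hw₁ : ∀ x, HasDerivAt w₁ (γ * w₁ x + l₁ * Φ₁ x) x := by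
    intro x
    have hA : HasDerivAt (deriv Φ₁) (deriv (deriv Φ₁) x) x := (hd1' x).hasDerivAt
    have hB : HasDerivAt (fun y => b y * Φ₁ y) (deriv (fun y => b y * Φ₁ y) x) x :=
      ((hbd x).mul (hd1 x)).hasDerivAt
    have hC : HasDerivAt (fun y => γ * Φ₁ y) (γ * deriv Φ₁ x) x := (hd1 x).hasDerivAt.const_mul γ
    have := (hA.sub hB).add hC
    refine this.congr_deriv (Eq.symm ?_)
    have e1 := heq1 x
    have e2 := hab x
    simp only [hw₁def, hl₁]
    linear_combination Φ₁ x * e2 - e1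
  have hw₂ : ∀ x, HasDerivAt w₂ (-γ * w₂ x + l₂ * Φ₂ x) x := by
    intro x
    have hA : HasDerivAt (deriv Φ₂) (deriv (deriv Φ₂) x) x := (hd2' x).hasDerivAt
    have hB : HasDerivAt (fun y => b y * Φ₂ y) (deriv (fun y => b y * Φ₂ y) x) x :=
      ((hbd x).mul (hd2 x)).hasDerivAt
    have hC : HasDerivAt (fun y => γ * Φ₂ y) (γ * deriv Φ₂ x) x := (hd2 x).hasDerivAt.const_mul γ
    have := (hA.add hB).sub hC
    refine this.congr_deriv (Eq.symm ?_)
    have e1 := heq2 x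
    have e2 := hab x
    simp only [hw₂def, hl₂]
    linear_combination Φ₂ x * e2 - e1
  -- continuity facts
  have hc1 : Continuous Φ₁ := h1.continuous
  have hc2 : Continuous Φ₂ := h2.continuous
  have hcb : Continuous b := hb.continuous
  have hcw₁ : Continuous w₁ := by
    simp only [hw₁def]
    exact ((h1'.continuous.sub (hcb.mul hc1)).add (continuous_const.mul hc1))
  have hcw₂ : Continuous w₂ := by
    simp only [hw₂def]
    exact ((h2'.continuous.add (hcb.mul hc2)).sub (continuous_const.mul hc2))
  -- periodicity of w₁, w₂
  have hp1' : Function.Periodic (deriv Φ₁) 1 := periodic_deriv' h1per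
  have hp2' : Function.Periodic (deriv Φ₂) 1 := periodic_deriv' h2per
  have hpw₁ : Function.Periodic w₁ 1 := by
    intro x; simp only [hw₁def, hp1' x, hbper x, h1per x]
  have hpw₂ : Function.Periodic w₂ 1 := by
    intro x; simp only [hw₂def, hp2' x, hbper x, h2per x]
  -- a helper: integral of derivative of a periodic C¹ function is zero
  have int_per : ∀ (F F' : ℝ → ℝ), (∀ x, HasDerivAt F (F' x) x) → Function.Periodic F 1 →
      Continuous F' → ∫ x in (0:ℝ)..1, F' x = 0 := by
    intro F F' hF hFper hF'c
    rw [intervalIntegral.integral_eq_sub_of_hasDerivAt (fun t _ => hF t)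
      (hF'c.intervalIntegrable _ _)]
    have := hFper 0
    norm_num at this
    rw [this]; ring
  -- main case split
  rcases eq_or_ne γ 0 with hγ | hγ
  · -- γ = 0 : both eigenvalues equal β
    have e1 : ∫ x in (0:ℝ)..1, (γ * w₁ x + l₁ * Φ₁ x) = 0 :=
      int_per w₁ _ hw₁ hpw₁ ((continuous_const.mul hcw₁).add (continuous_const.mul hc1))
    have e2 : ∫ x in (0:ℝ)..1, (-γ * w₂ x + l₂ * Φ₂ x) = 0 :=
      int_per w₂ _ hw₂ hpw₂ ((continuous_const.mul hcw₂).add (continuous_const.mul hc2))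
    rw [hγ] at e1 e2
    simp only [zero_mul, neg_zero, zero_add] at e1 e2
    rw [intervalIntegral.integral_const_mul] at e1 e2
    have hI1 : 0 < ∫ x in (0:ℝ)..1, Φ₁ x :=
      intervalIntegral.intervalIntegral_pos_of_pos (hc1.intervalIntegrable _ _) h1pos one_pos
    have hI2 : 0 < ∫ x in (0:ℝ)..1, Φ₂ x :=
      intervalIntegral.intervalIntegral_pos_of_pos (hc2.intervalIntegrable _ _) h2pos one_pos
    have : l₁ = 0 := by
      rcases mul_eq_zero.mp e1 with h | h
      · exact h
      · exact absurd h hI1.ne'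
    have : l₂ = 0 := by
      rcases mul_eq_zero.mp e2 with h | h
      · exact h
      · exact absurd h hI2.ne'
    simp only [hl₁, hl₂] at *
    linarith
  · -- γ ≠ 0
    by_contra hne
    have hll : l₁ ≠ l₂ := by simp only [hl₁, hl₂]; intro h; exact hne (by linarith)
    set A : ℝ := ∫ x in (0:ℝ)..1, Φ₁ x * w₂ x with hA
    set B : ℝ := ∫ x in (0:ℝ)..1, Φ₂ x * w₁ x with hB
    -- identity 1 : A + B = 0
    have hR : ∀ x, HasDerivAt (fun y => Φ₁ y * Φ₂ y) (Φ₁ x * w₂ x + Φ₂ x * w₁ x) x := by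
      intro x
      have := ((hd1 x).hasDerivAt).mul ((hd2 x).hasDerivAt)
      refine this.congr_deriv (Eq.symm ?_)
      simp only [hw₁def, hw₂def]; ring
    have hid1 : ∫ x in (0:ℝ)..1, (Φ₁ x * w₂ x + Φ₂ x * w₁ x) = 0 :=
      int_per _ _ hR (fun x => by simp only [h1per x, h2per x]) ((hc1.mul hcw₂).add (hc2.mul hcw₁))
    have hABsum : A + B = 0 := by
      rw [hA, hB, ← intervalIntegral.integral_add (f := fun x => Φ₁ x * w₂ x) (g := fun x => Φ₂ x * w₁ x) ((hc1.mul hcw₂).intervalIntegrable _ _)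
        ((hc2.mul hcw₁).intervalIntegrable _ _)]
      exact hid1
    -- identity 2 : l₁ A + l₂ B = 0
    have hQ : ∀ x, HasDerivAt (fun y => w₁ y * w₂ y)
        (l₁ * (Φ₁ x * w₂ x) + l₂ * (Φ₂ x * w₁ x)) x := by
      intro x
      have := (hw₁ x).mul (hw₂ x)
      refine this.congr_deriv (Eq.symm ?_)
      ring
    have hid2 : ∫ x in (0:ℝ)..1, (l₁ * (Φ₁ x * w₂ x) + l₂ * (Φ₂ x * w₁ x)) = 0 :=
      int_per _ _ hQ (fun x => by simp only [hpw₁ x, hpw₂ x]) ((continuous_const.mul (hc1.mul hcw₂)).add (continuous_const.mul (hc2.mul hcw₁)))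
    have hlAB : l₁ * A + l₂ * B = 0 := by
      rw [hA, hB, ← intervalIntegral.integral_const_mul, ← intervalIntegral.integral_const_mul,
        ← intervalIntegral.integral_add (f := fun x => l₁ * (Φ₁ x * w₂ x)) (g := fun x => l₂ * (Φ₂ x * w₁ x))
          ((continuous_const.mul (hc1.mul hcw₂)).intervalIntegrable _ _)
          ((continuous_const.mul (hc2.mul hcw₁)).intervalIntegrable _ _)]
      exact hid2
    have hA0 : A = 0 := by
      have : (l₁ - l₂) * A = 0 := by linear_combination hlAB - l₂ * hABsum
      rcases mul_eq_zero.mp this with h | h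
      · exact absurd (by linarith : l₁ = l₂) hll
      · exact h
    have hB0 : B = 0 := by linarith [hABsum]
    rcases eq_or_ne l₁ 0 with h10 | h10
    · -- then l₂ ≠ 0, use w₂ sign
      have h20 : l₂ ≠ 0 := fun h => hll (h10.trans h.symm)
      have hsgn := aux_sign (-γ) l₂ (neg_ne_zero.mpr hγ) h20 Φ₂ w₂ hc2 h2pos hpw₂ hw₂
      set s : ℝ := (Real.exp (-(-γ)) - 1) * l₂ with hs
      have : 0 < ∫ x in (0:ℝ)..1, Φ₁ x * (s * w₂ x) := by
        apply intervalIntegral.intervalIntegral_pos_of_pos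
          ((hc1.mul (continuous_const.mul hcw₂)).intervalIntegrable _ _)
        · intro x; exact mul_pos (h1pos x) (hsgn x)
        · norm_num
      have heqint : ∫ x in (0:ℝ)..1, Φ₁ x * (s * w₂ x) = s * A := by
        rw [hA, ← intervalIntegral.integral_const_mul]
        congr 1; funext x; ring
      rw [heqint, hA0, mul_zero] at this
      exact lt_irrefl 0 this
    · -- l₁ ≠ 0, use w₁ sign
      have hsgn := aux_sign γ l₁ hγ h10 Φ₁ w₁ hc1 h1pos hpw₁ hw₁
      set s : ℝ := (Real.exp (-γ) - 1) * l₁ with hs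
      have : 0 < ∫ x in (0:ℝ)..1, Φ₂ x * (s * w₁ x) := by
        apply intervalIntegral.intervalIntegral_pos_of_pos
          ((hc2.mul (continuous_const.mul hcw₁)).intervalIntegrable _ _)
        · intro x; exact mul_pos (h2pos x) (hsgn x)
        · norm_num
      have heqint : ∫ x in (0:ℝ)..1, Φ₂ x * (s * w₁ x) = s * B := by
        rw [hB, ← intervalIntegral.integral_const_mul]
        congr 1; funext x; ring
      rw [heqint, hB0, mul_zero] at this
      exact lt_irrefl 0 this
end
end

section
/- Let D be a positive, 1-periodic, C² function, r a continuous 1-periodic function, q ∈ ℝ, and let (k, ψ) be a principal eigenpair of L_q^0[r;D]. Then for every positive, 1-periodic, C² function φ with ∫₀¹ φ(x)² dx = 1, one has −∫₀¹ D(x)^{1−q}·((D^{q/2}φ)'(x))² dx + ∫₀¹ r(x)φ(x)² dx ≤ k, and equality holds for the test function φ₀ := D^{q/2}ψ / (∫₀¹ D(x)^q ψ(x)² dx)^{1/2}. Hence k_q^0[r;D] equals the maximum, over positive 1-periodic C² functions φ with ∫₀¹ φ² = 1, of −∫₀¹ D^{1−q}|(D^{q/2}φ)'|² + ∫₀¹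 rφ². -/
open Real MeasureTheory Set Filter Topology

noncomputable section

lemma periodic_deriv_aux {f : ℝ → ℝ} (hf : Differentiable ℝ f)
    (hfp : Function.Periodic f 1) : Function.Periodic (deriv f) 1 := by
  intro x
  have h1 : HasDerivAt (fun y => f (y + 1)) (deriv f (x + 1)) x :=
    (hf (x + 1)).hasDerivAt.comp_add_const x 1
  have h2 : (fun y : ℝ => f (y + 1)) = f := funext hfp
  rw [h2] at h1
  exact h1.deriv.symm

lemma deriv_contDiff_one {f : ℝ → ℝ} (hf : ContDiff ℝ 2 f) : ContDiff ℝ 1 (deriv f) := by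
  have h : ContDiff ℝ (1+1 : ℕ) f := by exact_mod_cast hf
  exact (contDiff_succ_iff_deriv.mp h).2.2

lemma master {D r ψ φ : ℝ → ℝ} {q k : ℝ}
    (hD : ContDiff ℝ 2 D) (hDpos : ∀ x, 0 < D x) (hDper : Function.Periodic D 1)
    (hr : Continuous r)
    (hψC : ContDiff ℝ 2 ψ) (hψpos : ∀ x, 0 < ψ x) (hψper : Function.Periodic ψ 1)
    (heig : ∀ x, Lop q 0 r D ψ x = k * ψ x)
    (hφC : ContDiff ℝ 2 φ) (hφper : Function.Periodic φ 1) :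
    -(∫ x in (0:ℝ)..1, D x ^ (1 - q) * (deriv (fun y => D y ^ (q / 2) * φ y) x) ^ 2) +
        (∫ x in (0:ℝ)..1, r x * φ x ^ 2)
      = k * (∫ x in (0:ℝ)..1, φ x ^ 2)
        - ∫ x in (0:ℝ)..1,
            D x * (deriv φ x - deriv ψ x / ψ x * φ x - q / 2 * (deriv D x / D x) * φ x) ^ 2 := by
  -- basic regularity facts
  have hD1 : Differentiable ℝ D := hD.differentiable two_ne_zero
  have hψ1 : Differentiable ℝ ψ := hψC.differentiable two_ne_zero
  have hφ1 : Differentiable ℝ φ := hφC.differentiable two_ne_zero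
  have hDd := deriv_contDiff_one hD
  have hψd := deriv_contDiff_one hψC
  have hD'1 : Differentiable ℝ (deriv D) := hDd.differentiable one_ne_zero
  have hψ'1 : Differentiable ℝ (deriv ψ) := hψd.differentiable one_ne_zero
  have hcD : Continuous D := hD.continuous
  have hcψ : Continuous ψ := hψC.continuous
  have hcφ : Continuous φ := hφC.continuous
  have hcD' : Continuous (deriv D) := hD.continuous_deriv one_le_two
  have hcψ' : Continuous (deriv ψ) := hψC.continuous_deriv one_le_two
  have hcφ' : Continuous (deriv φ) := hφC.continuous_deriv one_le_two
  have hDne : ∀ x, D x ≠ 0 := fun x => (hDpos x).ne'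
  have hψne : ∀ x, ψ x ≠ 0 := fun x => (hψpos x).ne'
  -- derivative of D^{q/2} φ
  have hgd : ∀ x, HasDerivAt (fun y => D y ^ (q / 2) * φ y)
      (D x ^ (q / 2) * (deriv φ x + q / 2 * (deriv D x / D x) * φ x)) x := by
    intro x
    have h1 : HasDerivAt (fun y => D y ^ (q / 2)) (deriv D x * (q / 2) * D x ^ (q / 2 - 1)) x :=
      (hD1 x).hasDerivAt.rpow_const (Or.inl (hDne x))
    have h2 := h1.mul (hφ1 x).hasDerivAt
    refine h2.congr_deriv ?_
    have hsub : D x ^ (q / 2 - 1) = D x ^ (q / 2) / D x := by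
      rw [Real.rpow_sub (hDpos x), Real.rpow_one]
    rw [hsub]; field_simp; ring
  -- pointwise rewrite of the gradient integrand
  have hgrad_eq : ∀ x, D x ^ (1 - q) * (deriv (fun y => D y ^ (q / 2) * φ y) x) ^ 2
      = D x * (deriv φ x + q / 2 * (deriv D x / D x) * φ x) ^ 2 := by
    intro x
    rw [(hgd x).deriv]
    have hDq : D x ^ (1 - q) * (D x ^ (q / 2) * D x ^ (q / 2)) = D x := by
      rw [← Real.rpow_add (hDpos x), ← Real.rpow_add (hDpos x),
        show 1 - q + (q / 2 + q / 2) = 1 by ring, Real.rpow_one]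
    calc D x ^ (1 - q) * (D x ^ (q / 2) * (deriv φ x + q / 2 * (deriv D x / D x) * φ x)) ^ 2
        = (D x ^ (1 - q) * (D x ^ (q / 2) * D x ^ (q / 2))) *
            (deriv φ x + q / 2 * (deriv D x / D x) * φ x) ^ 2 := by ring
      _ = _ := by rw [hDq]
  -- P and its derivative from the eigenequation
  set P : ℝ → ℝ := fun x => D x * deriv ψ x + q * (deriv D x * ψ x) with hPdef
  have hPd : ∀ x, HasDerivAt P ((k - r x) * ψ x) x := by
    intro x
    have h1 : HasDerivAt (fun y => D y * deriv ψ y)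
        (deriv D x * deriv ψ x + D x * deriv (deriv ψ) x) x :=
      (hD1 x).hasDerivAt.mul (hψ'1 x).hasDerivAt
    have h2 : HasDerivAt (fun y => q * (deriv D y * ψ y))
        (q * (deriv (deriv D) x * ψ x + deriv D x * deriv ψ x)) x :=
      ((hD'1 x).hasDerivAt.mul (hψ1 x).hasDerivAt).const_mul q
    have h3 := h1.add h2
    refine h3.congr_deriv ?_
    have he := heig x
    simp only [Lop] at he
    linear_combination he
  -- derivative of Q = φ²/ψ
  have hQd : ∀ x, HasDerivAt (fun y => φ y ^ 2 / ψ y)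
      ((2 * φ x * deriv φ x * ψ x - φ x ^ 2 * deriv ψ x) / ψ x ^ 2) x := by
    intro x
    have h1 : HasDerivAt (fun y => φ y ^ 2) (2 * φ x * deriv φ x) x := by
      have := (hφ1 x).hasDerivAt.pow 2
      refine this.congr_deriv ?_
      norm_num
    have h2 := h1.div (hψ1 x).hasDerivAt (hψne x)
    exact h2
  have hPQd : ∀ x, HasDerivAt (fun y => P y * (φ y ^ 2 / ψ y))
      ((k - r x) * ψ x * (φ x ^ 2 / ψ x)
        + P x * ((2 * φ x * deriv φ x * ψ x - φ x ^ 2 * deriv ψ x) / ψ x ^ 2)) x :=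
    fun x => (hPd x).mul (hQd x)
  -- the key pointwise algebraic identity
  have key : ∀ x, (k - r x) * ψ x * (φ x ^ 2 / ψ x)
        + P x * ((2 * φ x * deriv φ x * ψ x - φ x ^ 2 * deriv ψ x) / ψ x ^ 2)
      = k * φ x ^ 2
        - D x * (deriv φ x - deriv ψ x / ψ x * φ x - q / 2 * (deriv D x / D x) * φ x) ^ 2
        + D x * (deriv φ x + q / 2 * (deriv D x / D x) * φ x) ^ 2 - r x * φ x ^ 2 := by
    intro x
    simp only [hPdef]
    field_simp [hψne x, hDne x]
    ring
  -- integral of the exact derivative vanishes by periodicity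
  have hψ'per := periodic_deriv_aux hψ1 hψper
  have hD'per := periodic_deriv_aux hD1 hDper
  have hφ'per := periodic_deriv_aux hφ1 hφper
  have hPQper : (fun y => P y * (φ y ^ 2 / ψ y)) 1 = (fun y => P y * (φ y ^ 2 / ψ y)) 0 := by
    simp only [hPdef]
    rw [show (1:ℝ) = 0 + 1 by norm_num, hDper 0, hψper 0, hφper 0, hψ'per 0, hD'per 0]
  have hderiv_eq : deriv (fun y => P y * (φ y ^ 2 / ψ y))
      = fun x => (k - r x) * ψ x * (φ x ^ 2 / ψ x)
        + P x * ((2 * φ x * deriv φ x * ψ x - φ x ^ 2 * deriv ψ x) / ψ x ^ 2) :=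
    funext fun x => (hPQd x).deriv
  have hcont : Continuous (fun x => (k - r x) * ψ x * (φ x ^ 2 / ψ x)
      + P x * ((2 * φ x * deriv φ x * ψ x - φ x ^ 2 * deriv ψ x) / ψ x ^ 2)) := by
    apply Continuous.add
    · exact ((continuous_const.sub hr).mul hcψ).mul ((hcφ.pow 2).div hcψ hψne)
    · refine Continuous.mul ?_ ?_
      · simp only [hPdef]
        exact (hcD.mul hcψ').add (continuous_const.mul (hcD'.mul hcψ))
      · refine Continuous.div ?_ (hcψ.pow 2) (fun x => pow_ne_zero 2 (hψne x))
        exact (((continuous_const.mul hcφ).mul hcφ').mul hcψ).sub ((hcφ.pow 2).mul hcψ')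
  have hint0 : (∫ x in (0:ℝ)..1, ((k - r x) * ψ x * (φ x ^ 2 / ψ x)
      + P x * ((2 * φ x * deriv φ x * ψ x - φ x ^ 2 * deriv ψ x) / ψ x ^ 2))) = 0 := by
    have := intervalIntegral.integral_deriv_eq_sub
      (f := fun y => P y * (φ y ^ 2 / ψ y)) (a := 0) (b := 1)
      (fun x _ => (hPQd x).differentiableAt)
      (by rw [hderiv_eq]; exact hcont.intervalIntegrable 0 1)
    rw [hderiv_eq] at this
    rw [this]; exact sub_eq_zero.mpr hPQper
  -- continuity of the pieces
  have hcs : Continuous (fun x =>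
      D x * (deriv φ x - deriv ψ x / ψ x * φ x - q / 2 * (deriv D x / D x) * φ x) ^ 2) := by
    apply hcD.mul
    apply Continuous.pow
    exact (hcφ'.sub ((hcψ'.div hcψ hψne).mul hcφ)).sub
      ((continuous_const.mul (hcD'.div hcD hDne)).mul hcφ)
  have hca : Continuous (fun x => D x * (deriv φ x + q / 2 * (deriv D x / D x) * φ x) ^ 2) :=
    hcD.mul (Continuous.pow (hcφ'.add ((continuous_const.mul (hcD'.div hcD hDne)).mul hcφ)) 2)
  -- rewrite the vanishing integral using the key identity and split
  have hsplit : (∫ x in (0:ℝ)..1, ((k - r x) * ψ x * (φ x ^ 2 / ψ x)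
      + P x * ((2 * φ x * deriv φ x * ψ x - φ x ^ 2 * deriv ψ x) / ψ x ^ 2)))
      = k * (∫ x in (0:ℝ)..1, φ x ^ 2)
        - (∫ x in (0:ℝ)..1, D x * (deriv φ x - deriv ψ x / ψ x * φ x
            - q / 2 * (deriv D x / D x) * φ x) ^ 2)
        + (∫ x in (0:ℝ)..1, D x * (deriv φ x + q / 2 * (deriv D x / D x) * φ x) ^ 2)
        - (∫ x in (0:ℝ)..1, r x * φ x ^ 2) := by
    rw [intervalIntegral.integral_congr (g := fun x => k * φ x ^ 2
        - D x * (deriv φ x - deriv ψ x / ψ x * φ x - q / 2 * (deriv D x / D x) * φ x) ^ 2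
        + D x * (deriv φ x + q / 2 * (deriv D x / D x) * φ x) ^ 2 - r x * φ x ^ 2)
      (fun x _ => key x)]
    rw [intervalIntegral.integral_sub (f := fun x => k * φ x ^ 2 - D x * (deriv φ x - deriv ψ x / ψ x * φ x - q / 2 * (deriv D x / D x) * φ x) ^ 2 + D x * (deriv φ x + q / 2 * (deriv D x / D x) * φ x) ^ 2)
        (g := fun x => r x * φ x ^ 2) (by
        apply IntervalIntegrable.add
        · exact IntervalIntegrable.sub
            ((continuous_const.mul (hcφ.pow 2)).intervalIntegrable 0 1)
            (hcs.intervalIntegrable 0 1)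
        · exact hca.intervalIntegrable 0 1)
      ((hr.mul (hcφ.pow 2)).intervalIntegrable 0 1)]
    rw [intervalIntegral.integral_add (f := fun x => k * φ x ^ 2 - D x * (deriv φ x - deriv ψ x / ψ x * φ x - q / 2 * (deriv D x / D x) * φ x) ^ 2)
        (g := fun x => D x * (deriv φ x + q / 2 * (deriv D x / D x) * φ x) ^ 2) (IntervalIntegrable.sub
        ((continuous_const.mul (hcφ.pow 2)).intervalIntegrable 0 1)
        (hcs.intervalIntegrable 0 1)) (hca.intervalIntegrable 0 1)]
    rw [intervalIntegral.integral_sub (f := fun x => k * φ x ^ 2)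
        (g := fun x => D x * (deriv φ x - deriv ψ x / ψ x * φ x - q / 2 * (deriv D x / D x) * φ x) ^ 2) ((continuous_const.mul (hcφ.pow 2)).intervalIntegrable 0 1)
        (hcs.intervalIntegrable 0 1)]
    rw [intervalIntegral.integral_const_mul]
  -- rewrite the gradient integral
  have hgradint : (∫ x in (0:ℝ)..1, D x ^ (1 - q) * (deriv (fun y => D y ^ (q / 2) * φ y) x) ^ 2)
      = ∫ x in (0:ℝ)..1, D x * (deriv φ x + q / 2 * (deriv D x / D x) * φ x) ^ 2 :=
    intervalIntegral.integral_congr (fun x _ => hgrad_eq x)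
  rw [hgradint]
  rw [hsplit] at hint0
  linarith

/-- Lemma `variational`. Variational characterization of
`k_q^0[r;D]`: for every positive 1-periodic C² test function `φ` with `∫₀¹ φ² = 1`,
`−∫₀¹ D^{1−q}|(D^{q/2}φ)'|² + ∫₀¹ rφ² ≤ k_q^0[r;D]`, with equality for the normalized
test function `φ₀ = D^{q/2}ψ / (∫₀¹ D^q ψ²)^{1/2}` built from the principal
eigenfunction `ψ`. -/
theorem stmt_18 (D r : ℝ → ℝ) (hD : ContDiff ℝ 2 D) (hDpos : ∀ x, 0 < D x)
    (hDper : Function.Periodic D 1) (hr : Continuous r) (hrper : Function.Periodic r 1)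
    (q k : ℝ) (ψ : ℝ → ℝ) (hψ : IsEigenpair q 0 r D k ψ) :
    (∀ φ : ℝ → ℝ, ContDiff ℝ 2 φ → (∀ x, 0 < φ x) → Function.Periodic φ 1 →
      (∫ x in (0:ℝ)..1, φ x ^ 2) = 1 →
      -(∫ x in (0:ℝ)..1, D x ^ (1 - q) * (deriv (fun y => D y ^ (q / 2) * φ y) x) ^ 2) +
          (∫ x in (0:ℝ)..1, r x * φ x ^ 2) ≤ k) ∧
    (let φ₀ : ℝ → ℝ := (fun x =>
        D x ^ (q / 2) * ψ x / Real.sqrt (∫ y in (0:ℝ)..1, D y ^ q * ψ y ^ 2));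
     -(∫ x in (0:ℝ)..1, D x ^ (1 - q) * (deriv (fun y => D y ^ (q / 2) * φ₀ y) x) ^ 2) +
          (∫ x in (0:ℝ)..1, r x * φ₀ x ^ 2) = k) := by
  obtain ⟨hψC, hψpos, hψper, heig⟩ := hψ
  have hψ1 : Differentiable ℝ ψ := hψC.differentiable two_ne_zero
  have hD1 : Differentiable ℝ D := hD.differentiable two_ne_zero
  have hDne : ∀ x, D x ≠ 0 := fun x => (hDpos x).ne'
  have hψne : ∀ x, ψ x ≠ 0 := fun x => (hψpos x).ne'
  constructor
  · intro φ hφC hφpos hφper hφnorm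
    have hm := master hD hDpos hDper hr hψC hψpos hψper heig hφC hφper
    rw [hφnorm, mul_one] at hm
    have hnn : 0 ≤ ∫ x in (0:ℝ)..1,
        D x * (deriv φ x - deriv ψ x / ψ x * φ x - q / 2 * (deriv D x / D x) * φ x) ^ 2 := by
      apply intervalIntegral.integral_nonneg (by norm_num)
      intro x _
      exact mul_nonneg (hDpos x).le (sq_nonneg _)
    linarith
  · -- the normalizing constant
    set I : ℝ := ∫ y in (0:ℝ)..1, D y ^ q * ψ y ^ 2 with hIdef
    have hcDq : Continuous (fun x => D x ^ q) :=
      hD.continuous.rpow_const (fun x => Or.inl (hDne x))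
    have hIpos : 0 < I := by
      apply intervalIntegral.intervalIntegral_pos_of_pos_on
        ((hcDq.mul (hψC.continuous.pow 2)).intervalIntegrable 0 1)
      · intro x _
        exact mul_pos (Real.rpow_pos_of_pos (hDpos x) q) (pow_pos (hψpos x) 2)
      · norm_num
    have hcpos : 0 < Real.sqrt I := Real.sqrt_pos.mpr hIpos
    have hcne : Real.sqrt I ≠ 0 := hcpos.ne'
    have hc2 : Real.sqrt I ^ 2 = I := Real.sq_sqrt hIpos.le
    intro φ₀
    -- properties of φ₀
    have hDq2C : ContDiff ℝ 2 (fun x => D x ^ (q / 2)) := by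
      rw [contDiff_iff_contDiffAt]
      intro x
      exact (hD.contDiffAt).rpow_const_of_ne (hDne x)
    have hφ₀C : ContDiff ℝ 2 φ₀ := (hDq2C.mul hψC).div_const _
    have hφ₀per : Function.Periodic φ₀ 1 := by
      intro x
      simp only [φ₀, hDper x, hψper x]
    have hφ₀norm : (∫ x in (0:ℝ)..1, φ₀ x ^ 2) = 1 := by
      have e1 : ∀ x, φ₀ x ^ 2 = D x ^ q * ψ x ^ 2 / I := by
        intro x
        simp only [φ₀]
        rw [div_pow, hc2, mul_pow, pow_two (D x ^ (q / 2)), ← Real.rpow_add (hDpos x),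
          show q / 2 + q / 2 = q by ring]
      rw [intervalIntegral.integral_congr (g := fun x => D x ^ q * ψ x ^ 2 / I)
        (fun x _ => e1 x), intervalIntegral.integral_div, ← hIdef, div_self hIpos.ne']
    -- φ₀ kills the remainder term
    have hφ₀d : ∀ x, HasDerivAt φ₀
        ((deriv D x * (q / 2) * D x ^ (q / 2 - 1) * ψ x + D x ^ (q / 2) * deriv ψ x)
          / Real.sqrt I) x := by
      intro x
      have h1 : HasDerivAt (fun y => D y ^ (q / 2)) (deriv D x * (q / 2) * D x ^ (q / 2 - 1)) x :=
        (hD1 x).hasDerivAt.rpow_const (Or.inl (hDne x))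
      exact (h1.mul (hψ1 x).hasDerivAt).div_const _
    have hs0 : ∀ x, deriv φ₀ x - deriv ψ x / ψ x * φ₀ x - q / 2 * (deriv D x / D x) * φ₀ x = 0 := by
      intro x
      rw [(hφ₀d x).deriv]
      simp only [φ₀]
      have hsub : D x ^ (q / 2 - 1) = D x ^ (q / 2) / D x := by
        rw [Real.rpow_sub (hDpos x), Real.rpow_one]
      rw [hsub]
      field_simp [hDne x, hψne x, hcne]
      ring
    have hm := master hD hDpos hDper hr hψC hψpos hψper heig hφ₀C hφ₀per
    rw [hφ₀norm, mul_one] at hm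
    have hz : (∫ x in (0:ℝ)..1,
        D x * (deriv φ₀ x - deriv ψ x / ψ x * φ₀ x - q / 2 * (deriv D x / D x) * φ₀ x) ^ 2)
        = ∫ x in (0:ℝ)..1, (0:ℝ) := by
      apply intervalIntegral.integral_congr
      intro x _
      simp [hs0 x]
    rw [hz, intervalIntegral.integral_zero, sub_zero] at hm
    exact hm
end
end
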